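/- Let a ∈ A and c ∈ ℂˣ. For w ∈ ℂ such that the linear map L_w : A → A, L_w(X) = wX + aX − Xa, is invertible (which holds for all but finitely many w), set φ_a(w) = L_w^{-1}. Then the function r(u) = Σ_{i,j} φ_a(cu)(e_{ij}) ⊗ e_{ji} ∈ A⊗A, defined for those u ∈ ℂ with L_{cu} invertible, satisfies r^{12}(−u')·r^{13}(u+u') − r^{23}(u+u')·r^{12}(u) + r^{13}(u)·r^{23}(u') = 0 and r^{21}(−u) = −r(u) whenever all the relevant arguments lie in its domain; moreover each tensor r(u) is nondegenerate. -/

import Mathlib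

open scoped TensorProduct
set_option maxHeartbeats 1000000
noncomputable section

/-- The algebra of `N × N` complex matrices. -/
abbrev Mat (N : ℕ) := Matrix (Fin N) (Fin N) ℂ
/-- `A ⊗ A`. -/
abbrev TT (N : ℕ) := Mat N ⊗[ℂ] Mat N
/-- `A ⊗ A ⊗ A`. -/
abbrev TTT (N : ℕ) := Mat N ⊗[ℂ] (Mat N ⊗[ℂ] Mat N)

variable (N : ℕ)

/-- Matrix units `e_{ij}`. -/
def E (i j : Fin N) : Mat N := Matrix.single i j 1

/-- `x^{12}`: `a ⊗ b ↦ a ⊗ b ⊗ 1`. -/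
def leg12 : TT N →ₐ[ℂ] TTT N :=
  Algebra.TensorProduct.map (AlgHom.id ℂ (Mat N))
    (Algebra.TensorProduct.includeLeft (R := ℂ) (A := Mat N) (B := Mat N))

/-- `x^{13}`: `a ⊗ b ↦ a ⊗ 1 ⊗ b`. -/
def leg13 : TT N →ₐ[ℂ] TTT N :=
  Algebra.TensorProduct.map (AlgHom.id ℂ (Mat N))
    (Algebra.TensorProduct.includeRight (R := ℂ) (A := Mat N) (B := Mat N))

/-- `x^{23}`: `a ⊗ b ↦ 1 ⊗ a ⊗ b`. -/
def leg23 : TT N →ₐ[ℂ] TTT N :=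
  Algebra.TensorProduct.includeRight (R := ℂ) (A := Mat N) (B := TT N)

/-- `x^{21}`: `a ⊗ b ↦ b ⊗ a`. -/
def flip21 : TT N →ₐ[ℂ] TT N :=
  (Algebra.TensorProduct.comm ℂ (Mat N) (Mat N)).toAlgHom

/-- The `A ⊗ A`-valued function with coefficient functions `ρ`:
`r(u) = Σ ρ_{ij,kl}(u) e_{ij} ⊗ e_{kl}`. -/
def rOf (ρ : Fin N → Fin N → Fin N → Fin N → ℂ → ℂ) (u : ℂ) : TT N :=
  ∑ i : Fin N, ∑ j : Fin N, ∑ k : Fin N, ∑ l : Fin N,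
    ρ i j k l u • (E N i j ⊗ₜ[ℂ] E N k l)

/-- `u` is a non-pole point of `r` in `D`: all coefficient functions are analytic at `u`. -/
def GoodAt (D : Set ℂ) (ρ : Fin N → Fin N → Fin N → Fin N → ℂ → ℂ) (u : ℂ) : Prop :=
  u ∈ D ∧ ∀ i j k l : Fin N, AnalyticAt ℂ (ρ i j k l) u

/-- A tensor `x = Σ x_{ij,kl} e_{ij} ⊗ e_{kl}` (given by its coefficients) is
nondegenerate if the `N² × N²` matrix `(x_{ij,kl})` is invertible. -/
def NondegCoeff (x : Fin N → Fin N → Fin N → Fin N → ℂ) : Prop :=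
  IsUnit (Matrix.of fun p q : Fin N × Fin N => x p.1 p.2 q.1 q.2)

/-! ### Auxiliary lemmas -/

set_option synthInstance.maxHeartbeats 1000000

namespace Stmt9Aux

variable {N : ℕ}

/-- shortcut instances to speed up typeclass search -/
instance : AddCommGroup (TT N) := inferInstance
instance : AddCommGroup (TTT N) := inferInstance

lemma Lder (a : Mat N) (w w' : ℂ) (X Y : Mat N) :
    (w + w') • (X * Y) + a * (X * Y) - (X * Y) * a
      = (w • X + a * X - X * a) * Y + X * (w' • Y + a * Y - Y * a) := by
  simp only [add_smul, add_mul, mul_add, sub_mul, mul_sub, smul_mul_assoc, mul_smul_comm,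
    mul_assoc]
  abel

lemma trace_mul_E (X : Mat N) (k l : Fin N) : Matrix.trace (X * E N k l) = X l k := by
  simp [E, Matrix.trace, Matrix.diag, Matrix.mul_apply, Matrix.single, ite_and]

lemma trace_E_mul (Y : Mat N) (j i : Fin N) : Matrix.trace (E N j i * Y) = Y i j := by
  simp [E, Matrix.trace, Matrix.diag, Matrix.mul_apply, Matrix.single, ite_and]

lemma trace_adj (a : Mat N) (w : ℂ) (X Y : Mat N) :
    Matrix.trace (X * (w • Y + a * Y - Y * a))
      = - Matrix.trace (((-w) • X + a * X - X * a) * Y) := by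
  simp only [mul_add, mul_sub, add_mul, sub_mul, Matrix.trace_add, Matrix.trace_sub,
    Matrix.mul_smul, Matrix.smul_mul, Matrix.trace_smul, neg_smul, ← mul_assoc]
  simp only [Matrix.neg_mul, Matrix.trace_neg, Matrix.smul_mul, Matrix.trace_smul, neg_neg]
  rw [Matrix.trace_mul_comm (X*Y) a, ← mul_assoc a X Y]
  ring

lemma E_mul_mat (i j : Fin N) (M : Mat N) : E N i j * M = ∑ l, M j l • E N i l := by
  ext x y
  simp [E, Matrix.mul_apply, Matrix.single, Matrix.sum_apply, ite_and,
    Finset.sum_ite_eq, Finset.sum_ite_eq']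

lemma mat_mul_E (M : Mat N) (j i : Fin N) : M * E N j i = ∑ m, M m j • E N m i := by
  ext x y
  simp [E, Matrix.mul_apply, Matrix.single, Matrix.sum_apply, ite_and,
    Finset.sum_ite_eq, Finset.sum_ite_eq']

lemma mat_eq_sum (M : Mat N) : M = ∑ p : Fin N × Fin N, M p.1 p.2 • E N p.1 p.2 := by
  ext x y
  simp [E, Matrix.single, Matrix.sum_apply, ite_and, Fintype.sum_prod_type,
    Finset.sum_ite_eq, Finset.sum_ite_eq']

lemma E_mul_E (i j k l : Fin N) : E N i j * E N k l = if j = k then E N i l else 0 := by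
  by_cases h : j = k
  · subst h; simp [E]
  · simp [E, h, Matrix.single_mul_single_of_ne]

lemma sum5_rev {M : Type*} [AddCommMonoid M] (F : Fin N → Fin N → Fin N → Fin N → Fin N → M) :
    ∑ a, ∑ b, ∑ c, ∑ d, ∑ e, F a b c d e = ∑ a, ∑ b, ∑ c, ∑ d, ∑ e, F e d c b a := by
  have h1 : ∑ x : Fin N × Fin N × Fin N × Fin N × Fin N,
      F x.1 x.2.1 x.2.2.1 x.2.2.2.1 x.2.2.2.2 = ∑ a, ∑ b, ∑ c, ∑ d, ∑ e, F a b c d e := by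
    simp only [Fintype.sum_prod_type]
  have h2 : ∑ x : Fin N × Fin N × Fin N × Fin N × Fin N,
      F x.2.2.2.2 x.2.2.2.1 x.2.2.1 x.2.1 x.1 = ∑ a, ∑ b, ∑ c, ∑ d, ∑ e, F e d c b a := by
    simp only [Fintype.sum_prod_type]
  rw [← h1, ← h2]
  exact Fintype.sum_equiv ⟨fun x => ⟨x.2.2.2.2, x.2.2.2.1, x.2.2.1, x.2.1, x.1⟩,
    fun x => ⟨x.2.2.2.2, x.2.2.2.1, x.2.2.1, x.2.1, x.1⟩, fun _ => rfl, fun _ => rfl⟩ _ _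
    (fun _ => rfl)

lemma sum4_rev {M : Type*} [AddCommMonoid M] (F : Fin N → Fin N → Fin N → Fin N → M) :
    ∑ a, ∑ b, ∑ c, ∑ d, F a b c d = ∑ a, ∑ b, ∑ c, ∑ d, F d c b a := by
  have h1 : ∑ x : Fin N × Fin N × Fin N × Fin N,
      F x.1 x.2.1 x.2.2.1 x.2.2.2 = ∑ a, ∑ b, ∑ c, ∑ d, F a b c d := by
    simp only [Fintype.sum_prod_type]
  have h2 : ∑ x : Fin N × Fin N × Fin N × Fin N,
      F x.2.2.2 x.2.2.1 x.2.1 x.1 = ∑ a, ∑ b, ∑ c, ∑ d, F d c b a := by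
    simp only [Fintype.sum_prod_type]
  rw [← h1, ← h2]
  exact Fintype.sum_equiv ⟨fun x => ⟨x.2.2.2, x.2.2.1, x.2.1, x.1⟩,
    fun x => ⟨x.2.2.2, x.2.2.1, x.2.1, x.1⟩, fun _ => rfl, fun _ => rfl⟩ _ _ (fun _ => rfl)

lemma lemA (f : Mat N →ₗ[ℂ] Mat N) (M C : Mat N) :
    ∑ p : Fin N × Fin N, f (E N p.1 p.2 * M) ⊗ₜ[ℂ] (E N p.2 p.1 ⊗ₜ[ℂ] C)
      = ∑ p : Fin N × Fin N, f (E N p.1 p.2) ⊗ₜ[ℂ] ((M * E N p.2 p.1) ⊗ₜ[ℂ] C) := by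
  simp only [Fintype.sum_prod_type, E_mul_mat, mat_mul_E, map_sum, map_smul,
    TensorProduct.sum_tmul, ← TensorProduct.smul_tmul', TensorProduct.tmul_sum,
    TensorProduct.tmul_smul]
  exact Finset.sum_congr rfl fun i _ => Finset.sum_comm

lemma lemB (f g k : Mat N →ₗ[ℂ] Mat N)
    (hadj : ∀ i j k' l', (k (E N j i)) l' k' = -((g (E N k' l')) i j)) :
    ∑ p : Fin N × Fin N, ∑ q : Fin N × Fin N,
        f (k (E N p.1 p.2) * E N q.1 q.2) ⊗ₜ[ℂ] (E N p.2 p.1 ⊗ₜ[ℂ] E N q.2 q.1)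
      = - ∑ p : Fin N × Fin N, ∑ q : Fin N × Fin N,
        f (E N p.1 p.2) ⊗ₜ[ℂ] (g (E N q.1 q.2) ⊗ₜ[ℂ] (E N p.2 p.1 * E N q.2 q.1)) := by
  have hk : ∀ p1 p2 q1 q2 : Fin N, k (E N p1 p2) * E N q1 q2
      = ∑ x : Fin N × Fin N, (if x.2 = q1 then (k (E N p1 p2)) x.1 x.2 • E N x.1 q2 else 0) := by
    intro p1 p2 q1 q2
    conv_lhs => rw [mat_eq_sum (k (E N p1 p2))]
    rw [Finset.sum_mul]
    refine Finset.sum_congr rfl fun x _ => ?_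
    rw [smul_mul_assoc, E_mul_E]
    split <;> simp
  simp only [hk, E_mul_E, map_sum, apply_ite f, map_zero, map_smul,
    TensorProduct.ite_tmul, TensorProduct.tmul_ite, TensorProduct.tmul_zero,
    TensorProduct.zero_tmul, TensorProduct.sum_tmul, TensorProduct.tmul_sum,
    ← TensorProduct.smul_tmul', TensorProduct.smul_tmul, TensorProduct.tmul_smul,
    Fintype.sum_prod_type, Finset.sum_ite_eq, Finset.sum_ite_eq', Finset.mem_univ, if_true]
  have hg : ∀ x2 x : Fin N, g (E N x2 x)
      = ∑ y : Fin N × Fin N, -((k (E N y.2 y.1)) x x2) • E N y.1 y.2 := by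
    intro x2 x
    conv_lhs => rw [mat_eq_sum (g (E N x2 x))]
    refine Finset.sum_congr rfl fun y _ => ?_
    rw [hadj, neg_neg]
  simp only [hg, neg_smul, ← Finset.sum_neg_distrib, TensorProduct.sum_tmul,
    TensorProduct.tmul_sum, TensorProduct.neg_tmul, TensorProduct.tmul_neg,
    ← TensorProduct.smul_tmul', TensorProduct.tmul_smul, Fintype.sum_prod_type, neg_neg]
  exact sum5_rev fun a b c d e => k (E N a b) e c • f (E N e d) ⊗ₜ[ℂ] (E N b a ⊗ₜ[ℂ] E N d c)

lemma R2 (a : Mat N) (w₁ w₂ w₃ : ℂ) (hw : w₁ + w₂ = w₃)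
    (ψ₁ ψ₂ ψ₃ : Mat N →ₗ[ℂ] Mat N)
    (h3inj : Function.Injective (fun X : Mat N => w₃ • X + a * X - X * a))
    (h1 : ∀ X, w₁ • ψ₁ X + a * ψ₁ X - ψ₁ X * a = X)
    (h2 : ∀ X, w₂ • ψ₂ X + a * ψ₂ X - ψ₂ X * a = X)
    (h3 : ∀ X, w₃ • ψ₃ X + a * ψ₃ X - ψ₃ X * a = X)
    (x y : Mat N) : ψ₁ x * ψ₂ y = ψ₃ (x * ψ₂ y + ψ₁ x * y) := by
  apply h3inj
  show w₃ • (ψ₁ x * ψ₂ y) + a * (ψ₁ x * ψ₂ y) - (ψ₁ x * ψ₂ y) * a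
      = w₃ • ψ₃ _ + a * ψ₃ _ - ψ₃ _ * a
  rw [h3, ← hw, Lder a w₁ w₂, h1, h2]

lemma adj_entry (a : Mat N) (w : ℂ) (ψp ψm : Mat N →ₗ[ℂ] Mat N)
    (hp : ∀ X, w • ψp X + a * ψp X - ψp X * a = X)
    (hm : ∀ X, (-w) • ψm X + a * ψm X - ψm X * a = X)
    (i j k l : Fin N) : (ψm (E N j i)) l k = -((ψp (E N k l)) i j) := by
  have h := trace_adj a w (ψm (E N j i)) (ψp (E N k l))
  rw [hp, hm] at h
  rw [← trace_mul_E (ψm (E N j i)) k l, h, trace_E_mul]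

lemma phi_linv (a : Mat N) (w : ℂ) (ψ : Mat N →ₗ[ℂ] Mat N)
    (hb : Function.Bijective (fun X : Mat N => w • X + a * X - X * a))
    (hR : ∀ X, w • ψ X + a * ψ X - ψ X * a = X) (X : Mat N) :
    ψ (w • X + a * X - X * a) = X :=
  hb.injective (hR (w • X + a * X - X * a))

lemma leg12_tmul (x y : Mat N) : leg12 N (x ⊗ₜ[ℂ] y) = x ⊗ₜ[ℂ] (y ⊗ₜ[ℂ] 1) := by
  simp [leg12]

lemma leg13_tmul (x y : Mat N) : leg13 N (x ⊗ₜ[ℂ] y) = x ⊗ₜ[ℂ] ((1 : Mat N) ⊗ₜ[ℂ] y) := by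
  simp [leg13]

lemma leg23_tmul (x y : Mat N) : leg23 N (x ⊗ₜ[ℂ] y) = (1 : Mat N) ⊗ₜ[ℂ] (x ⊗ₜ[ℂ] y) := by
  simp [leg23]

lemma flip21_tmul (x y : Mat N) : flip21 N (x ⊗ₜ[ℂ] y) = y ⊗ₜ[ℂ] x := by
  simp [flip21]

lemma lemFlip (f m : Mat N →ₗ[ℂ] Mat N)
    (hadj : ∀ i j k' l', (m (E N j i)) l' k' = -((f (E N k' l')) i j)) :
    flip21 N (∑ p : Fin N × Fin N, m (E N p.1 p.2) ⊗ₜ[ℂ] E N p.2 p.1)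
      = - ∑ p : Fin N × Fin N, f (E N p.1 p.2) ⊗ₜ[ℂ] E N p.2 p.1 := by
  have hm : ∀ i j : Fin N, m (E N i j)
      = ∑ y : Fin N × Fin N, -((f (E N y.2 y.1)) j i) • E N y.1 y.2 := by
    intro i j
    conv_lhs => rw [mat_eq_sum (m (E N i j))]
    refine Finset.sum_congr rfl fun y _ => ?_
    rw [hadj j i y.2 y.1]
  have hL : flip21 N (∑ p : Fin N × Fin N, m (E N p.1 p.2) ⊗ₜ[ℂ] E N p.2 p.1)
      = ∑ a, ∑ b, ∑ c, ∑ d, (-((f (E N d c)) b a)) • (E N b a ⊗ₜ[ℂ] E N c d) := by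
    rw [map_sum]
    simp only [flip21_tmul, hm, TensorProduct.tmul_sum, TensorProduct.tmul_smul,
      Fintype.sum_prod_type]
  have hR : - ∑ p : Fin N × Fin N, f (E N p.1 p.2) ⊗ₜ[ℂ] E N p.2 p.1
      = ∑ a, ∑ b, ∑ c, ∑ d, (-((f (E N a b)) c d)) • (E N c d ⊗ₜ[ℂ] E N b a) := by
    rw [show ∑ p : Fin N × Fin N, f (E N p.1 p.2) ⊗ₜ[ℂ] E N p.2 p.1
        = ∑ a, ∑ b, ∑ c, ∑ d, ((f (E N a b)) c d) • (E N c d ⊗ₜ[ℂ] E N b a) from ?_]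
    · simp only [← Finset.sum_neg_distrib, neg_smul]
    · rw [Fintype.sum_prod_type]
      refine Finset.sum_congr rfl fun a _ => Finset.sum_congr rfl fun b _ => ?_
      conv_lhs => rw [mat_eq_sum (f (E N a b))]
      rw [TensorProduct.sum_tmul, Fintype.sum_prod_type]
      simp only [← TensorProduct.smul_tmul']
  rw [hL, hR]
  exact sum4_rev fun a b c d => (-((f (E N d c)) b a)) • (E N b a ⊗ₜ[ℂ] E N c d)

lemma nondeg (a : Mat N) (w : ℂ) (ψ : Mat N →ₗ[ℂ] Mat N)
    (hlinv : ∀ X, ψ (w • X + a * X - X * a) = X) :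
    IsUnit (Matrix.of fun p q : Fin N × Fin N => (ψ (E N q.2 q.1)) p.1 p.2) := by
  refine (Matrix.isUnit_iff_isUnit_det _).mpr (Matrix.isUnit_det_of_right_inverse (B := Matrix.of fun q r : Fin N × Fin N =>
    (w • E N r.1 r.2 + a * E N r.1 r.2 - E N r.1 r.2 * a) q.2 q.1) ?_)
  ext p r
  rw [Matrix.mul_apply]
  have h1 : ∑ q : Fin N × Fin N,
      (w • E N r.1 r.2 + a * E N r.1 r.2 - E N r.1 r.2 * a) q.2 q.1 • ψ (E N q.2 q.1)
      = ψ (w • E N r.1 r.2 + a * E N r.1 r.2 - E N r.1 r.2 * a) := by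
    conv_rhs => rw [mat_eq_sum (w • E N r.1 r.2 + a * E N r.1 r.2 - E N r.1 r.2 * a)]
    rw [map_sum]
    refine Fintype.sum_equiv (Equiv.prodComm _ _) _ _ (fun q => ?_)
    simp [map_smul]
  have h2 : ∀ q : Fin N × Fin N, (Matrix.of fun p q : Fin N × Fin N =>
        ψ (E N q.2 q.1) p.1 p.2) p q * (Matrix.of fun q r : Fin N × Fin N =>
        (w • E N r.1 r.2 + a * E N r.1 r.2 - E N r.1 r.2 * a) q.2 q.1) q r
      = ((w • E N r.1 r.2 + a * E N r.1 r.2 - E N r.1 r.2 * a) q.2 q.1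
          • ψ (E N q.2 q.1)) p.1 p.2 := by
    intro q
    simp [mul_comm]
  rw [Finset.sum_congr rfl (fun q _ => h2 q), ← Matrix.sum_apply, h1,
    hlinv (E N r.1 r.2)]
  by_cases h : p = r
  · subst h; simp [E, Matrix.single, Matrix.one_apply]
  · have hne : ¬ (r.1 = p.1 ∧ r.2 = p.2) := by
      intro hcon; exact h (Prod.ext hcon.1.symm hcon.2.symm)
    simp [E, Matrix.single, Matrix.one_apply, h, hne]

end Stmt9Aux

open Stmt9Aux in
/-- `r(u) = (φ_a(cu) ⊗ id)(P)` is a nondegenerate unitary solution of the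
`v`-independent AYBE, where `φ_a(w)` is the inverse of `X ↦ wX + [a, X]` (defined whenever
the latter is bijective, which holds for all but finitely many `w`). -/
theorem stmt9 (N : ℕ) (a : Mat N) (c : ℂ) (hc : c ≠ 0)
    (φ : ℂ → Mat N →ₗ[ℂ] Mat N)
    (hφ : ∀ w : ℂ, Function.Bijective (fun X : Mat N => w • X + a * X - X * a) →
      ∀ X : Mat N, w • (φ w) X + a * (φ w) X - (φ w) X * a = X)
    (r : ℂ → TT N)
    (hr : ∀ u : ℂ, r u = ∑ p : Fin N × Fin N, (φ (c * u)) (E N p.1 p.2) ⊗ₜ[ℂ] E N p.2 p.1) :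
    {w : ℂ | ¬ Function.Bijective (fun X : Mat N => w • X + a * X - X * a)}.Finite
    ∧ (∀ u u' : ℂ,
        Function.Bijective (fun X : Mat N => (c * u) • X + a * X - X * a) →
        Function.Bijective (fun X : Mat N => (c * u') • X + a * X - X * a) →
        Function.Bijective (fun X : Mat N => (c * (u + u')) • X + a * X - X * a) →
        Function.Bijective (fun X : Mat N => (c * (-u')) • X + a * X - X * a) →
        leg12 N (r (-u')) * leg13 N (r (u + u'))
          - leg23 N (r (u + u')) * leg12 N (r u)
          + leg13 N (r u) * leg23 N (r u') = 0)
    ∧ (∀ u : ℂ,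
        Function.Bijective (fun X : Mat N => (c * u) • X + a * X - X * a) →
        Function.Bijective (fun X : Mat N => (c * (-u)) • X + a * X - X * a) →
        flip21 N (r (-u)) = - r u)
    ∧ (∀ u : ℂ,
        Function.Bijective (fun X : Mat N => (c * u) • X + a * X - X * a) →
        NondegCoeff N (fun i j k l => ((φ (c * u)) (E N l k)) i j)) := by
  classical
  refine ⟨?_, ?_, ?_, ?_⟩
  · -- finiteness of the singular set
    set D : Module.End ℂ (Mat N) := LinearMap.mulLeft ℂ a - LinearMap.mulRight ℂ a with hD
    have hfin : (spectrum ℂ D).Finite := Module.End.finite_spectrum D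
    have hsub : {w : ℂ | ¬ Function.Bijective (fun X : Mat N => w • X + a * X - X * a)}
        ⊆ (fun w : ℂ => -w) ⁻¹' (spectrum ℂ D) := by
      intro w hw
      simp only [Set.mem_preimage, spectrum.mem_iff]
      intro hUnit
      apply hw
      have hUnit' : IsUnit (-(algebraMap ℂ (Module.End ℂ (Mat N)) (-w) - D)) := hUnit.neg
      have hb := (Module.End.isUnit_iff _).mp hUnit'
      have : ⇑(-(algebraMap ℂ (Module.End ℂ (Mat N)) (-w) - D))
          = fun X : Mat N => w • X + a * X - X * a := by
        funext X
        simp only [LinearMap.neg_apply, LinearMap.sub_apply, Module.algebraMap_end_apply,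
          hD, LinearMap.mulLeft_apply, LinearMap.mulRight_apply, neg_smul]
        abel
      rwa [this] at hb
    exact hfin.preimage (fun x _ y _ h => neg_injective h) |>.subset hsub
  · -- AYBE
    intro u u' hu hu' huu hmu'
    have hfR := hφ _ hu
    have hgR := hφ _ hu'
    have hhR := hφ _ huu
    have hkR := hφ _ hmu'
    rw [hr, hr, hr, hr]
    simp only [map_sum, leg12_tmul, leg13_tmul, leg23_tmul]
    have hsms : ∀ (f g : Fin N × Fin N → TTT N),
        (∑ p, f p) * (∑ q, g q) = ∑ p, ∑ q, f p * g q := fun f g =>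
      Finset.sum_mul_sum Finset.univ Finset.univ f g
    rw [hsms, hsms, hsms]
    simp only [Algebra.TensorProduct.tmul_mul_tmul, one_mul, mul_one]
    have e1 : ∀ (p q : Fin N × Fin N),
        (φ (c * -u')) (E N p.1 p.2) * (φ (c * (u + u'))) (E N q.1 q.2)
          = (φ (c * u)) (E N p.1 p.2 * (φ (c * (u + u'))) (E N q.1 q.2))
            + (φ (c * u)) ((φ (c * -u')) (E N p.1 p.2) * E N q.1 q.2) := by
      intro p q
      rw [R2 a (c * -u') (c * (u + u')) (c * u) (by ring) _ _ _ hu.injective hkR hhR hfR,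
        map_add]
    simp only [e1, TensorProduct.add_tmul, Finset.sum_add_distrib]
    have e2 : ∑ p : Fin N × Fin N, ∑ q : Fin N × Fin N,
          (φ (c * u)) (E N p.1 p.2 * (φ (c * (u + u'))) (E N q.1 q.2))
            ⊗ₜ[ℂ] (E N p.2 p.1 ⊗ₜ[ℂ] E N q.2 q.1)
        = ∑ q : Fin N × Fin N, ∑ p : Fin N × Fin N,
          (φ (c * u)) (E N p.1 p.2)
            ⊗ₜ[ℂ] (((φ (c * (u + u'))) (E N q.1 q.2) * E N p.2 p.1) ⊗ₜ[ℂ] E N q.2 q.1) := by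
      rw [Finset.sum_comm]
      exact Finset.sum_congr rfl fun q _ =>
        lemA (φ (c * u)) ((φ (c * (u + u'))) (E N q.1 q.2)) (E N q.2 q.1)
    have hkR' : ∀ X : Mat N, (-(c * u')) • (φ (c * -u')) X + a * (φ (c * -u')) X
        - (φ (c * -u')) X * a = X := by
      intro X
      have := hkR X
      rwa [mul_neg] at this ⊢
    have hadj : ∀ i j k' l', ((φ (c * -u')) (E N j i)) l' k'
        = -(((φ (c * u')) (E N k' l')) i j) :=
      adj_entry a (c * u') (φ (c * u')) (φ (c * -u')) hgR hkR'
    rw [e2, lemB (φ (c * u)) (φ (c * u')) (φ (c * -u')) hadj]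
    abel
  · -- unitarity
    intro u hu hmu
    have hfR := hφ _ hu
    have hmR := hφ _ hmu
    have hmR' : ∀ X : Mat N, (-(c * u)) • (φ (c * -u)) X + a * (φ (c * -u)) X
        - (φ (c * -u)) X * a = X := by
      intro X
      have := hmR X
      rwa [mul_neg] at this ⊢
    have hadj : ∀ i j k' l', ((φ (c * -u)) (E N j i)) l' k'
        = -(((φ (c * u)) (E N k' l')) i j) :=
      adj_entry a (c * u) (φ (c * u)) (φ (c * -u)) hfR hmR'
    rw [hr, hr]
    exact lemFlip (φ (c * u)) (φ (c * -u)) hadj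
  · -- nondegeneracy
    intro u hu
    have hfR := hφ _ hu
    exact nondeg a (c * u) (φ (c * u)) (phi_linv a (c * u) (φ (c * u)) hu hfR)
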